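/- The set C_0^i of asymptotic classes of geodesic rays from the origin in DL_2(q) that ascend forever in tree T_i without turning is not open in the visual boundary ∂DL_2(q): every class in C_0^i is a limit of a sequence of classes [γ_n] with [γ_n] ∈ C_n^{1-i} (rays agreeing with γ on the first n edges but then bottoming out in T_{1-i}). -/

import Mathlib

/-- A vertex of the (q+1)-regular tree with a distinguished end, in the
horocyclic model: a height `k ∈ ℤ` together with a finitely supported
labelling of the levels strictly below `k`. -/
structure TreeVert (q : ℕ) where
  height : ℤ
  labels : ℤ → ℕ
  labels_lt : ∀ n, labels n = 0 ∨ labels n < q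
  supp_below : ∀ n, height ≤ n → labels n = 0
  fin_supp : (Function.support labels).Finite

namespace DL

variable {q d : ℕ}

/-- `v` is a child of `u` (one step further from the distinguished end). -/
abbrev treeAdjUp (u v : TreeVert q) : Prop :=
  v.height = u.height + 1 ∧ ∀ n, n ≠ u.height → v.labels n = u.labels n

/-- The (q+1)-regular tree. -/
def TreeGraph (q : ℕ) : SimpleGraph (TreeVert q) where
  Adj u v := treeAdjUp u v ∨ treeAdjUp v u
  symm := ⟨fun u v h => Or.symm h⟩
  loopless := by
    constructor
    intro u h
    rcases h with ⟨h1, _⟩ | ⟨h1, _⟩ <;> omega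

/-- The base vertex of the tree. -/
def treeOrigin (q : ℕ) : TreeVert q :=
  ⟨0, fun _ => 0, fun _ => Or.inl rfl, fun _ _ => rfl, by simp⟩

/-- Vertices of the Diestel–Leader graph `DL_d(q)`:
`d`-tuples of tree vertices whose heights sum to zero. -/
def DLVert (d q : ℕ) : Type :=
  {x : Fin d → TreeVert q // (∑ i, (x i).height) = 0}

/-- The Diestel–Leader graph `DL_d(q)`: an edge ascends in one tree and
descends in another, all other coordinates being fixed. -/
def DLGraph (d q : ℕ) : SimpleGraph (DLVert d q) where
  Adj v w := ∃ i j : Fin d, i ≠ j ∧ treeAdjUp (v.1 i) (w.1 i) ∧ treeAdjUp (w.1 j) (v.1 j) ∧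
      ∀ k : Fin d, k ≠ i → k ≠ j → v.1 k = w.1 k
  symm := by
    constructor
    rintro v w ⟨i, j, hij, h1, h2, h3⟩
    exact ⟨j, i, hij.symm, h2, h1, fun k hk1 hk2 => (h3 k hk2 hk1).symm⟩
  loopless := by
    constructor
    rintro v ⟨i, j, hij, ⟨h1, _⟩, _⟩
    omega

/-- The base point of `DL_d(q)`. -/
def origin (d q : ℕ) : DLVert d q :=
  ⟨fun _ => treeOrigin q, by simp [treeOrigin]⟩

/-- A geodesic ray in `DL_d(q)` : an isometric embedding of `ℕ`. -/
def IsGeodesicRay (γ : ℕ → DLVert d q) : Prop :=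
  ∀ m n : ℕ, m ≤ n → (DLGraph d q).dist (γ m) (γ n) = n - m

/-- Two rays are asymptotic when they stay at uniformly bounded distance. -/
def Asymptotic (γ γ' : ℕ → DLVert d q) : Prop :=
  ∃ C : ℕ, ∀ n : ℕ, (DLGraph d q).dist (γ n) (γ' n) ≤ C

instance : TopologicalSpace (DLVert d q) := ⊥

/-- Geodesic rays emanating from the origin, with the topology of uniform
convergence on compact sets (= pointwise convergence, the vertex set being
discrete). -/
def RaySpace (d q : ℕ) : Type :=
  {γ : ℕ → DLVert d q // IsGeodesicRay γ ∧ γ 0 = origin d q}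

instance : TopologicalSpace (RaySpace d q) := by
  unfold RaySpace; infer_instance

lemma reachable_origin (γ : RaySpace d q) (n : ℕ) :
    (DLGraph d q).Reachable (origin d q) (γ.1 n) := by
  cases n with
  | zero => rw [γ.2.2]
  | succ n =>
    have h := γ.2.1 0 (n + 1) (Nat.zero_le _)
    have hne : (DLGraph d q).dist (γ.1 0) (γ.1 (n + 1)) ≠ 0 := by
      rw [h]; omega
    have := SimpleGraph.Reachable.of_dist_ne_zero hne
    rwa [γ.2.2] at this

/-- Asymptoticity as an equivalence relation on geodesic rays from the origin. -/
def asympSetoid (d q : ℕ) : Setoid (RaySpace d q) where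
  r γ γ' := Asymptotic γ.1 γ'.1
  iseqv := by
    constructor
    · intro γ
      exact ⟨0, fun n => by simp [SimpleGraph.dist_self]⟩
    · rintro γ γ' ⟨C, hC⟩
      exact ⟨C, fun n => by rw [SimpleGraph.dist_comm]; exact hC n⟩
    · rintro a b c ⟨C1, h1⟩ ⟨C2, h2⟩
      refine ⟨C1 + C2, fun n => ?_⟩
      have hab : (DLGraph d q).Reachable (a.1 n) (b.1 n) :=
        (reachable_origin a n).symm.trans (reachable_origin b n)
      have hbc : (DLGraph d q).Reachable (b.1 n) (c.1 n) :=
        (reachable_origin b n).symm.trans (reachable_origin c n)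
      obtain ⟨p, hp⟩ := hab.exists_walk_length_eq_dist
      obtain ⟨p', hp'⟩ := hbc.exists_walk_length_eq_dist
      calc (DLGraph d q).dist (a.1 n) (c.1 n) ≤ (p.append p').length :=
            SimpleGraph.dist_le _
        _ = (DLGraph d q).dist (a.1 n) (b.1 n) + (DLGraph d q).dist (b.1 n) (c.1 n) := by
            rw [SimpleGraph.Walk.length_append, hp, hp']
        _ ≤ C1 + C2 := Nat.add_le_add (h1 n) (h2 n)

/-- The visual boundary of `DL_d(q)`: asymptotic classes of geodesic rays
from the origin, with the quotient topology. -/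
def Boundary (d q : ℕ) : Type := Quotient (asympSetoid d q)

instance : TopologicalSpace (Boundary d q) := by
  unfold Boundary; infer_instance

/-- A ray in `DL_2(q)` descends for exactly `n` steps in tree `i`
(bottoming out at height `-n`), then ascends forever in tree `i`.
For `n = 0` this says the ray ascends forever in tree `i` with no turn. -/
def DescendsExactly (i : Fin 2) (n : ℕ) (γ : ℕ → DLVert 2 q) : Prop :=
  (∀ t : ℕ, t ≤ n → ((γ t).1 i).height = -(t : ℤ)) ∧
  (∀ t : ℕ, n ≤ t → ((γ t).1 i).height = (t : ℤ) - 2 * n)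

/-- The subset `C_n^i` of the boundary: classes of rays bottoming out in
tree `i` after descending exactly `n` edges. -/
def Cset (q : ℕ) (i : Fin 2) (n : ℕ) : Set (Boundary 2 q) :=
  {x | ∃ γ : RaySpace 2 q, Quotient.mk (asympSetoid 2 q) γ = x ∧ DescendsExactly i n γ.1}

/-- Projection of a path in `DL_d(q)` to the `i`-th tree. -/
def proj (i : Fin d) (γ : ℕ → DLVert d q) : ℕ → TreeVert q := fun n => (γ n).1 i

/-- Two (lazy) paths in the tree converge to the same end: both eventually
leave every ball, and they come within a uniformly bounded distance of each
other at arbitrarily late times. -/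
def SameEnd (a b : ℕ → TreeVert q) : Prop :=
  (∀ R : ℕ, ∃ N : ℕ, ∀ n, N ≤ n → R ≤ (TreeGraph q).dist (a 0) (a n)) ∧
  (∀ R : ℕ, ∃ N : ℕ, ∀ n, N ≤ n → R ≤ (TreeGraph q).dist (b 0) (b n)) ∧
  (∃ C : ℕ, ∀ N : ℕ, ∃ m n, N ≤ m ∧ N ≤ n ∧ (TreeGraph q).dist (a m) (b n) ≤ C)

/-- The step from `p m` to `p (m+1)` descends in tree `i`. -/
def StepDown (i : Fin d) (p : ℕ → DLVert d q) (m : ℕ) : Prop :=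
  treeAdjUp ((p (m + 1)).1 i) ((p m).1 i)

/-- The step from `p m` to `p (m+1)` ascends in tree `i`. -/
def StepUp (i : Fin d) (p : ℕ → DLVert d q) (m : ℕ) : Prop :=
  treeAdjUp ((p m).1 i) ((p (m + 1)).1 i)

/-- A turn in tree `i`: a subpath beginning with a descent in `T_i` at step `t`,
ending with an ascent in `T_i` at step `s`, with no intervening step
involving `T_i`. -/
def IsTurn (i : Fin d) (p : ℕ → DLVert d q) (t s : ℕ) : Prop :=
  t < s ∧ StepDown i p t ∧ StepUp i p s ∧
    ∀ m, t < m → m < s → (p (m + 1)).1 i = (p m).1 i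

section Aux

lemma TreeVert.ext' {u v : TreeVert q} (h1 : u.height = v.height)
    (h2 : u.labels = v.labels) : u = v := by
  cases u; cases v; simp_all

lemma fin2_cases' (i k : Fin 2) : k = i ∨ k = 1 - i := by
  fin_cases i <;> fin_cases k <;> simp

lemma fin2_cases {i j : Fin 2} (h : i ≠ j) (k : Fin 2) : k = i ∨ k = j := by
  fin_cases i <;> fin_cases j <;> fin_cases k <;> simp_all

lemma fin2_ne (i : Fin 2) : (1 - i) ≠ i := by fin_cases i <;> decide

lemma fin2_sub_sub (i : Fin 2) : 1 - (1 - i) = i := by fin_cases i <;> decide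

lemma height_sum (v : DLVert 2 q) (k : Fin 2) :
    (v.1 k).height + (v.1 (1 - k)).height = 0 := by
  have h := v.2
  rw [Fin.sum_univ_two] at h
  fin_cases k
  · simpa using h
  · simpa [add_comm] using h

lemma adj_height {v w : DLVert 2 q} (h : (DLGraph 2 q).Adj v w) (k : Fin 2) :
    (w.1 k).height = (v.1 k).height + 1 ∨ (w.1 k).height = (v.1 k).height - 1 := by
  obtain ⟨a, b, hab, ⟨ha1, _⟩, ⟨hb1, _⟩, _⟩ := h
  rcases fin2_cases hab k with rfl | rfl
  · left; exact ha1
  · right; omega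

lemma adj_labels {v w : DLVert 2 q} (h : (DLGraph 2 q).Adj v w) (k : Fin 2) (l : ℤ)
    (h1 : l < (v.1 k).height) (h2 : l < (w.1 k).height) :
    (v.1 k).labels l = (w.1 k).labels l := by
  obtain ⟨a, b, hab, ⟨ha1, ha2⟩, ⟨hb1, hb2⟩, _⟩ := h
  rcases fin2_cases hab k with rfl | rfl
  · exact (ha2 l (by omega)).symm
  · exact hb2 l (by omega)

lemma walk_height_le {v w : DLVert 2 q} (p : (DLGraph 2 q).Walk v w) (k : Fin 2) :
    |(v.1 k).height - (w.1 k).height| ≤ (p.length : ℤ) := by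
  induction p with
  | nil => simp
  | @cons a b c hadj p ih =>
    rw [SimpleGraph.Walk.length_cons]
    rw [abs_le] at ih ⊢
    rcases adj_height hadj k with h1 | h1 <;> push_cast <;> omega

lemma walk_labels_eq {v w : DLVert 2 q} (p : (DLGraph 2 q).Walk v w) (k : Fin 2) (l : ℤ)
    (hsup : ∀ x ∈ p.support, l < (x.1 k).height) :
    (v.1 k).labels l = (w.1 k).labels l := by
  induction p with
  | nil => rfl
  | @cons a b c hadj p ih =>
    have h1 : l < (a.1 k).height := hsup a (by simp)
    have h2 : l < (b.1 k).height := hsup b (by simp)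
    rw [adj_labels hadj k l h1 h2]
    exact ih fun x hx => hsup x (by rw [SimpleGraph.Walk.support_cons]; exact List.mem_cons_of_mem _ hx)

lemma dist_height_le {v w : DLVert 2 q} (h : (DLGraph 2 q).Reachable v w) (k : Fin 2) :
    |(v.1 k).height - (w.1 k).height| ≤ ((DLGraph 2 q).dist v w : ℤ) := by
  obtain ⟨p, hp⟩ := h.exists_walk_length_eq_dist
  rw [← hp]
  exact walk_height_le p k

lemma dist_labels_le {v w : DLVert 2 q} (h : (DLGraph 2 q).Reachable v w) (k : Fin 2) (l : ℤ)
    (hne : (v.1 k).labels l ≠ (w.1 k).labels l) :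
    ((v.1 k).height - l) + ((w.1 k).height - l) ≤ ((DLGraph 2 q).dist v w : ℤ) := by
  classical
  obtain ⟨p, hp⟩ := h.exists_walk_length_eq_dist
  by_cases hall : ∀ x ∈ p.support, l < (x.1 k).height
  · exact absurd (walk_labels_eq p k l hall) hne
  push_neg at hall
  obtain ⟨x, hx, hxh⟩ := hall
  have h1 := walk_height_le (p.takeUntil x hx) k
  have h2 := walk_height_le (p.dropUntil x hx) k
  have hlen : (p.takeUntil x hx).length + (p.dropUntil x hx).length = p.length := by
    rw [← SimpleGraph.Walk.length_append, SimpleGraph.Walk.take_spec]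
  rw [abs_le] at h1 h2
  rw [← hp, ← hlen]
  push_cast
  omega

lemma chain_reachable {p : ℕ → DLVert 2 q}
    (h : ∀ t, (DLGraph 2 q).Adj (p t) (p (t + 1)))
    {m t : ℕ} (hmt : m ≤ t) : (DLGraph 2 q).Reachable (p m) (p t) := by
  induction t, hmt using Nat.le_induction with
  | base => exact SimpleGraph.Reachable.refl _
  | succ n hn ih => exact ih.trans (h n).reachable

lemma chain_walk {p : ℕ → DLVert 2 q}
    (h : ∀ t, (DLGraph 2 q).Adj (p t) (p (t + 1)))
    {m t : ℕ} (hmt : m ≤ t) :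
    ∃ w : (DLGraph 2 q).Walk (p m) (p t), w.length = t - m := by
  induction t, hmt using Nat.le_induction with
  | base => exact ⟨SimpleGraph.Walk.nil, by simp⟩
  | succ n hn ih =>
    obtain ⟨w, hw⟩ := ih
    exact ⟨w.concat (h n), by rw [SimpleGraph.Walk.length_concat]; omega⟩

lemma chain_dist_le {p : ℕ → DLVert 2 q}
    (h : ∀ t, (DLGraph 2 q).Adj (p t) (p (t + 1)))
    {m t : ℕ} (hmt : m ≤ t) : (DLGraph 2 q).dist (p m) (p t) ≤ t - m := by
  obtain ⟨w, hw⟩ := chain_walk h hmt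
  rw [← hw]
  exact SimpleGraph.dist_le w

lemma ray_adj (γ : RaySpace 2 q) (t : ℕ) :
    (DLGraph 2 q).Adj (γ.1 t) (γ.1 (t + 1)) := by
  have h := γ.2.1 t (t + 1) (Nat.le_succ t)
  rw [show t + 1 - t = 1 from by omega] at h
  exact SimpleGraph.dist_eq_one_iff_adj.mp h

/-- the all-zero vertex at a given height. -/
def zeroVert (h : ℤ) : TreeVert q :=
  ⟨h, fun _ => 0, fun _ => Or.inl rfl, fun _ _ => rfl, by simp⟩

lemma origin_coord (k : Fin 2) : ((origin 2 q).1 k) = zeroVert 0 := rfl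

variable {i : Fin 2}

lemma asc_height (γ : RaySpace 2 q) (hd : DescendsExactly i 0 γ.1) (t : ℕ) :
    ((γ.1 t).1 i).height = (t : ℤ) := by
  have h := hd.2 t (Nat.zero_le t)
  push_cast at h
  omega

lemma desc_height (γ : RaySpace 2 q) (hd : DescendsExactly i 0 γ.1) (t : ℕ) :
    ((γ.1 t).1 (1 - i)).height = -(t : ℤ) := by
  have h := height_sum (γ.1 t) i
  have h2 := asc_height γ hd t
  omega

lemma descend_coord (γ : RaySpace 2 q) (hd : DescendsExactly i 0 γ.1) (t : ℕ) :
    (γ.1 t).1 (1 - i) = zeroVert (-(t : ℤ)) := by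
  induction t with
  | zero =>
    rw [γ.2.2, origin_coord]
    norm_num
  | succ t ih =>
    obtain ⟨a, b, hab, ⟨ha1, ha2⟩, ⟨hb1, hb2⟩, _⟩ := ray_adj γ t
    have hbne : b = 1 - i := by
      rcases fin2_cases' i b with rfl | h
      · exfalso
        have e1 := asc_height γ hd t
        have e2 := asc_height γ hd (t + 1)
        push_cast at e2
        omega
      · exact h
    subst hbne
    have hh : ((γ.1 (t + 1)).1 (1 - i)).height = -((t : ℤ) + 1) := by
      have := desc_height γ hd (t + 1); push_cast at this; omega
    apply TreeVert.ext' hh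
    funext l
    show ((γ.1 (t + 1)).1 (1 - i)).labels l = 0
    by_cases hl : l = -((t : ℤ) + 1)
    · exact ((γ.1 (t + 1)).1 (1 - i)).supp_below l (by omega)
    · rw [← hb2 l (by omega), ih]
      rfl

/-- the ascending vertex in tree `1-i` at time `t ≥ n`. -/
def ascVert (hq : 2 ≤ q) (n t : ℕ) : TreeVert q where
  height := (t : ℤ) - 2 * n
  labels := fun l => if -(n : ℤ) ≤ l ∧ l < (t : ℤ) - 2 * n then 1 else 0
  labels_lt := fun l => by
    split
    · right; omega
    · left; rfl
  supp_below := fun l hl => by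
    split
    · omega
    · rfl
  fin_supp := by
    apply Set.Finite.subset (Set.finite_Icc (-(n : ℤ)) ((t : ℤ) - 2 * n))
    intro l hl
    simp only [Function.mem_support] at hl
    rw [Set.mem_Icc]
    by_contra hmem
    apply hl
    rw [if_neg (by omega)]

/-- vertex obtained from `bv` by truncating all labels at levels `≥ h`. -/
def descVert (bv : TreeVert q) (h : ℤ) : TreeVert q where
  height := h
  labels := fun l => if l < h then bv.labels l else 0
  labels_lt := fun l => by
    split
    · exact bv.labels_lt l
    · left; rfl
  supp_below := fun l hl => by
    rw [if_neg (by omega)]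
  fin_supp := by
    apply Set.Finite.subset bv.fin_supp
    intro l hl
    simp only [Function.mem_support] at hl ⊢
    intro h0
    apply hl
    split
    · exact h0
    · rfl

def mk2 (i : Fin 2) (a b : TreeVert q) : Fin 2 → TreeVert q :=
  fun k => if k = i then a else b

lemma mk2_same (i : Fin 2) (a b : TreeVert q) : mk2 i a b i = a := if_pos rfl

lemma mk2_other (i : Fin 2) (a b : TreeVert q) : mk2 i a b (1 - i) = b :=
  if_neg (fin2_ne i)

lemma mk2_sum (i : Fin 2) (a b : TreeVert q) :
    (∑ k, (mk2 i a b k).height) = a.height + b.height := by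
  rw [Fin.sum_univ_two]
  fin_cases i <;> simp [mk2] <;> omega

/-- the modified vertex: descending in tree `i`, ascending in tree `1-i`. -/
def modVert (hq : 2 ≤ q) (γ : RaySpace 2 q) (i : Fin 2) (n t : ℕ) : DLVert 2 q :=
  ⟨mk2 i (descVert ((γ.1 n).1 i) (2 * (n : ℤ) - t)) (ascVert hq n t), by
    rw [mk2_sum]
    show 2 * (n : ℤ) - t + ((t : ℤ) - 2 * n) = 0
    ring⟩

lemma modVert_desc (hq : 2 ≤ q) (γ : RaySpace 2 q) (i : Fin 2) (n t : ℕ) :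
    (modVert hq γ i n t).1 i = descVert ((γ.1 n).1 i) (2 * (n : ℤ) - t) :=
  mk2_same _ _ _

lemma modVert_asc (hq : 2 ≤ q) (γ : RaySpace 2 q) (i : Fin 2) (n t : ℕ) :
    (modVert hq γ i n t).1 (1 - i) = ascVert hq n t :=
  mk2_other _ _ _

lemma modVert_n (hq : 2 ≤ q) (γ : RaySpace 2 q) (hd : DescendsExactly i 0 γ.1)
    (n : ℕ) : modVert hq γ i n n = γ.1 n := by
  apply Subtype.ext
  funext k
  rcases fin2_cases' i k with h | h
  · rw [h]
    show mk2 i _ _ i = _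
    rw [mk2_same]
    apply TreeVert.ext'
    · show 2 * (n : ℤ) - n = _
      rw [asc_height γ hd n]; ring
    · funext l
      show (if l < 2 * (n : ℤ) - n then _ else 0) = _
      split
      · rfl
      · exact (((γ.1 n).1 i).supp_below l (by rw [asc_height γ hd n]; omega)).symm
  · rw [h]
    show mk2 i _ _ (1 - i) = _
    rw [mk2_other, descend_coord γ hd n]
    apply TreeVert.ext'
    · show (n : ℤ) - 2 * n = -(n : ℤ); ring
    · funext l
      show (if -(n : ℤ) ≤ l ∧ l < (n : ℤ) - 2 * n then 1 else 0) = 0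
      rw [if_neg (by omega)]

/-- the modified ray: follows `γ` up to time `n`, then turns. -/
def modRay (hq : 2 ≤ q) (γ : RaySpace 2 q) (i : Fin 2) (n : ℕ) : ℕ → DLVert 2 q :=
  fun t => if n ≤ t then modVert hq γ i n t else γ.1 t

lemma modRay_eq_of_le (hq : 2 ≤ q) (γ : RaySpace 2 q) (hd : DescendsExactly i 0 γ.1)
    {n t : ℕ} (h : t ≤ n) : modRay hq γ i n t = γ.1 t := by
  rw [modRay]
  split
  · have ht : t = n := by omega
    rw [ht]
    exact modVert_n hq γ hd n
  · rfl

lemma modRay_eq_of_ge (hq : 2 ≤ q) (γ : RaySpace 2 q) (i : Fin 2)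
    {n t : ℕ} (h : n ≤ t) : modRay hq γ i n t = modVert hq γ i n t := if_pos h

lemma modRay_adj (hq : 2 ≤ q) (γ : RaySpace 2 q) (hd : DescendsExactly i 0 γ.1)
    (n : ℕ) (t : ℕ) :
    (DLGraph 2 q).Adj (modRay hq γ i n t) (modRay hq γ i n (t + 1)) := by
  rcases le_or_gt (t + 1) n with h1 | h1
  · rw [modRay_eq_of_le hq γ hd (by omega : t ≤ n), modRay_eq_of_le hq γ hd h1]
    exact ray_adj γ t
  · have h2 : n ≤ t := by omega
    rw [modRay_eq_of_ge hq γ i h2, modRay_eq_of_ge hq γ i (by omega : n ≤ t + 1)]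
    refine ⟨1 - i, i, fin2_ne i, ?_, ?_, ?_⟩
    · rw [modVert_asc, modVert_asc]
      constructor
      · show ((t : ℤ) + 1) - 2 * n = ((t : ℤ) - 2 * n) + 1
        push_cast; ring
      · intro l hl
        show (ascVert hq n (t + 1)).labels l = _
        have hl' : l ≠ (t : ℤ) - 2 * n := hl
        show (if -(n : ℤ) ≤ l ∧ l < ((t : ℕ) + 1 : ℕ) - 2 * n then 1 else 0) =
          (if -(n : ℤ) ≤ l ∧ l < (t : ℤ) - 2 * n then 1 else 0)
        push_cast
        split_ifs <;> omega
    · rw [modVert_desc, modVert_desc]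
      constructor
      · show 2 * (n : ℤ) - t = (2 * (n : ℤ) - (t + 1)) + 1
        push_cast; ring
      · intro l hl
        have hl' : l ≠ 2 * (n : ℤ) - ((t : ℤ) + 1) := by
          have h0 : l ≠ 2 * (n : ℤ) - ((t + 1 : ℕ) : ℤ) := hl
          push_cast at h0
          exact h0
        show (if l < 2 * (n : ℤ) - t then ((γ.1 n).1 i).labels l else 0) =
          (if l < 2 * (n : ℤ) - ((t : ℕ) + 1 : ℕ) then ((γ.1 n).1 i).labels l else 0)
        push_cast
        split_ifs <;> omega
    · intro k hk1 hk2
      rcases fin2_cases' i k with rfl | rfl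
      · exact absurd rfl hk2
      · exact absurd rfl hk1

lemma modRay_descends (hq : 2 ≤ q) (γ : RaySpace 2 q) (hd : DescendsExactly i 0 γ.1)
    (n : ℕ) : DescendsExactly (1 - i) n (modRay hq γ i n) := by
  constructor
  · intro t ht
    rw [modRay_eq_of_le hq γ hd ht]
    exact desc_height γ hd t
  · intro t ht
    rw [modRay_eq_of_ge hq γ i ht, modVert_asc]
    rfl

lemma modRay_geo (hq : 2 ≤ q) (γ : RaySpace 2 q) (hd : DescendsExactly i 0 γ.1)
    (n : ℕ) : IsGeodesicRay (modRay hq γ i n) := by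
  intro m t hmt
  have hadj := modRay_adj hq γ hd n
  refine le_antisymm (chain_dist_le hadj hmt) ?_
  have hreach := chain_reachable hadj hmt
  rcases le_or_gt t n with hc | hc
  · rw [modRay_eq_of_le hq γ hd (by omega : m ≤ n), modRay_eq_of_le hq γ hd hc]
    exact (γ.2.1 m t hmt).symm.le
  rcases le_or_gt n m with hc2 | hc2
  · -- both above n : use heights in tree 1 - i
    have hh := dist_height_le hreach (1 - i)
    have e1 : ((modRay hq γ i n m).1 (1 - i)).height = (m : ℤ) - 2 * n :=
      (modRay_descends hq γ hd n).2 m hc2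
    have e2 : ((modRay hq γ i n t).1 (1 - i)).height = (t : ℤ) - 2 * n :=
      (modRay_descends hq γ hd n).2 t (by omega)
    rw [e1, e2, abs_le] at hh
    omega
  · -- m < n < t : labels differ at level -n in tree 1 - i
    have hne : ((modRay hq γ i n m).1 (1 - i)).labels (-(n : ℤ)) ≠
        ((modRay hq γ i n t).1 (1 - i)).labels (-(n : ℤ)) := by
      rw [modRay_eq_of_le hq γ hd (by omega : m ≤ n), descend_coord γ hd m,
        modRay_eq_of_ge hq γ i (by omega : n ≤ t), modVert_asc]
      show (0 : ℕ) ≠ (if -(n : ℤ) ≤ -(n : ℤ) ∧ -(n : ℤ) < (t : ℤ) - 2 * n then 1 else 0)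
      rw [if_pos (by omega)]
      omega
    have hl := dist_labels_le hreach (1 - i) (-(n : ℤ)) hne
    have e1 : ((modRay hq γ i n m).1 (1 - i)).height = -(m : ℤ) :=
      (modRay_descends hq γ hd n).1 m (by omega)
    have e2 : ((modRay hq γ i n t).1 (1 - i)).height = (t : ℤ) - 2 * n :=
      (modRay_descends hq γ hd n).2 t (by omega)
    rw [e1, e2] at hl
    omega

/-- the modified ray as a point of the ray space. -/
def modRaySpace (hq : 2 ≤ q) (γ : RaySpace 2 q) (hd : DescendsExactly i 0 γ.1)
    (n : ℕ) : RaySpace 2 q :=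
  ⟨modRay hq γ i n, modRay_geo hq γ hd n, by
    rw [modRay_eq_of_le hq γ hd (Nat.zero_le n)]; exact γ.2.2⟩


/-- the spine ray ascending in tree `i`. -/
def spine (i : Fin 2) (t : ℕ) : DLVert 2 q :=
  ⟨mk2 i (zeroVert (t : ℤ)) (zeroVert (-(t : ℤ))), by
    rw [mk2_sum]
    show (t : ℤ) + (-(t : ℤ)) = 0
    ring⟩

lemma spine_same (i : Fin 2) (t : ℕ) : (spine (q := q) i t).1 i = zeroVert (t : ℤ) :=
  mk2_same _ _ _

lemma spine_other (i : Fin 2) (t : ℕ) :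
    (spine (q := q) i t).1 (1 - i) = zeroVert (-(t : ℤ)) := mk2_other _ _ _

lemma spine_adj (i : Fin 2) (t : ℕ) :
    (DLGraph 2 q).Adj (spine i t) (spine i (t + 1)) := by
  refine ⟨i, 1 - i, (fin2_ne i).symm, ?_, ?_, ?_⟩
  · rw [spine_same, spine_same]
    exact ⟨by show ((t + 1 : ℕ) : ℤ) = (t : ℤ) + 1; push_cast; ring, fun _ _ => rfl⟩
  · rw [spine_other, spine_other]
    exact ⟨by show -((t : ℕ) : ℤ) = -((t + 1 : ℕ) : ℤ) + 1; push_cast; ring, fun _ _ => rfl⟩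
  · intro k hk1 hk2
    rcases fin2_cases' i k with h | h
    · exact absurd h hk1
    · exact absurd h hk2

lemma spine_geo (i : Fin 2) : IsGeodesicRay (spine (q := q) i) := by
  intro m t hmt
  refine le_antisymm (chain_dist_le (spine_adj i) hmt) ?_
  have hh := dist_height_le (chain_reachable (p := spine (q := q) i) (spine_adj i) hmt) i
  have e1 : ((spine (q := q) i m).1 i).height = (m : ℤ) := by rw [spine_same]; rfl
  have e2 : ((spine (q := q) i t).1 i).height = (t : ℤ) := by rw [spine_same]; rfl
  rw [e1, e2, abs_le] at hh
  omega

/-- the spine ray as a point of the ray space. -/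
def spineRay (q : ℕ) (i : Fin 2) : RaySpace 2 q :=
  ⟨spine i, spine_geo i, by
    apply Subtype.ext
    funext k
    rcases fin2_cases' i k with h | h <;> rw [h]
    · rw [spine_same, origin_coord]
      apply TreeVert.ext' <;> norm_num [zeroVert]
    · rw [spine_other, origin_coord]
      apply TreeVert.ext' <;> norm_num [zeroVert]
  ⟩

lemma spine_descends (i : Fin 2) : DescendsExactly i 0 (spineRay q i).1 := by
  constructor
  · intro t ht
    have ht0 : t = 0 := by omega
    subst ht0
    show ((spine (q := q) i 0).1 i).height = _
    rw [spine_same]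
    norm_num [zeroVert]
  · intro t _
    show ((spine (q := q) i t).1 i).height = _
    rw [spine_same]
    show (t : ℤ) = (t : ℤ) - 2 * 0
    ring

lemma cset_disjoint {n : ℕ} (hn : 0 < n) {x : Boundary 2 q}
    (h1 : x ∈ Cset q i 0) (h2 : x ∈ Cset q (1 - i) n) : False := by
  obtain ⟨γ1, he1, hd1⟩ := h1
  obtain ⟨γ2, he2, hd2⟩ := h2
  have hasym : Asymptotic γ1.1 γ2.1 := Quotient.exact (he1.trans he2.symm)
  obtain ⟨C, hC⟩ := hasym
  set t := n + C + 1 with ht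
  have hr : (DLGraph 2 q).Reachable (γ1.1 t) (γ2.1 t) :=
    ((reachable_origin γ1 t).symm).trans (reachable_origin γ2 t)
  have hh := dist_height_le hr i
  have h1t : ((γ1.1 t).1 i).height = (t : ℤ) := asc_height γ1 hd1 t
  have h2b : ((γ2.1 t).1 (1 - i)).height = (t : ℤ) - 2 * n := hd2.2 t (by omega)
  have h2t : ((γ2.1 t).1 i).height = 2 * (n : ℤ) - t := by
    have hs := height_sum (γ2.1 t) (1 - i)
    rw [fin2_sub_sub] at hs
    omega
  have hCt := hC t
  rw [h1t, h2t, abs_le] at hh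
  omega

end Aux

instance : DiscreteTopology (DLVert d q) := ⟨rfl⟩

/-- `C_0^i` is not open: each of its points is a limit of a
sequence of classes with `u n ∈ C_n^{1-i}`. -/
theorem Cset_zero_not_open {q : ℕ} (hq : 2 ≤ q) (i : Fin 2) :
    (∀ x ∈ Cset q i 0, ∃ u : ℕ → Boundary 2 q,
      (∀ n : ℕ, 0 < n → u n ∈ Cset q (1 - i) n) ∧
      Filter.Tendsto u Filter.atTop (nhds x)) ∧
    ¬ IsOpen (Cset q i 0) := by
  have main : ∀ x ∈ Cset q i 0, ∃ u : ℕ → Boundary 2 q,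
      (∀ n : ℕ, 0 < n → u n ∈ Cset q (1 - i) n) ∧
      Filter.Tendsto u Filter.atTop (nhds x) := by
    intro x hx
    obtain ⟨γ, hγx, hd⟩ := hx
    refine ⟨fun n => Quotient.mk (asympSetoid 2 q) (modRaySpace hq γ hd n), ?_, ?_⟩
    · intro n hn
      exact ⟨modRaySpace hq γ hd n, rfl, modRay_descends hq γ hd n⟩
    · rw [← hγx]
      have hcont : Continuous (Quotient.mk (asympSetoid 2 q) : RaySpace 2 q → Boundary 2 q) :=
        continuous_quot_mk
      refine (hcont.tendsto γ).comp ?_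
      apply tendsto_subtype_rng.mpr
      rw [tendsto_pi_nhds]
      intro t
      rw [nhds_discrete, Filter.tendsto_pure]
      filter_upwards [Filter.eventually_ge_atTop t] with n hn
      show modRay hq γ i n t = γ.1 t
      exact modRay_eq_of_le hq γ hd hn
  refine ⟨main, ?_⟩
  intro hopen
  have hx0 : Quotient.mk (asympSetoid 2 q) (spineRay q i) ∈ Cset q i 0 :=
    ⟨spineRay q i, rfl, spine_descends i⟩
  obtain ⟨u, hu, hconv⟩ := main _ hx0
  have hev : ∀ᶠ n in Filter.atTop, u n ∈ Cset q i 0 := hconv (hopen.mem_nhds hx0)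
  obtain ⟨N, hN⟩ := Filter.eventually_atTop.mp hev
  exact cset_disjoint (n := N + 1) (by omega) (hN (N + 1) (by omega)) (hu (N + 1) (by omega))

end DL
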